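/- Let T be a finite set of half-open unit intervals [s_j, s_j + 1) on the real line with total union measure M (the optimal busy time over possibly several machines). Then there exists a set of pairwise disjoint unit intervals I_1, ..., I_k with k ≤ M such that every interval [s_j, s_j+1) has its left endpoint s_j contained in some I_i. -/

import Mathlib

open MeasureTheory ENNReal

lemma stmt_12_aux : ∀ (n : ℕ) (T : Finset ℝ), T.card ≤ n →
    ∃ (k : ℕ) (I : Fin k → ℝ),
      (∀ i : Fin k, I i ∈ T) ∧
      (∀ i j : Fin k, i ≠ j →
        Disjoint (Set.Ico (I i) (I i + 1)) (Set.Ico (I j) (I j + 1))) ∧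
      (k : ℝ≥0∞) ≤ volume (⋃ x ∈ T, Set.Ico x (x + 1)) ∧
      (∀ x ∈ T, ∃ i : Fin k, x ∈ Set.Ico (I i) (I i + 1)) := by
  intro n
  induction n with
  | zero =>
    intro T hT
    have : T = ∅ := Finset.card_eq_zero.mp (Nat.le_zero.mp hT)
    subst this
    exact ⟨0, Fin.elim0, fun i => i.elim0, fun i => i.elim0, by simp, by simp⟩
  | succ n ih =>
    intro T hT
    rcases T.eq_empty_or_nonempty with rfl | hne
    · exact ⟨0, Fin.elim0, fun i => i.elim0, fun i => i.elim0, by simp, by simp⟩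
    · set m := T.min' hne with hm
      have hmT : m ∈ T := T.min'_mem hne
      set T' := T.filter (fun x => m + 1 ≤ x) with hT'
      have hT'sub : T' ⊆ T := Finset.filter_subset _ _
      have hmnot : m ∉ T' := by
        simp only [hT', Finset.mem_filter]
        rintro ⟨-, h⟩; linarith
      have hcard : T'.card ≤ n := by
        have h1 : T'.card < T.card :=
          Finset.card_lt_card (Finset.ssubset_iff_of_subset hT'sub |>.mpr ⟨m, hmT, hmnot⟩)
        omega
      obtain ⟨k, I, hmem, hdisj, hvol, hcov⟩ := ih T' hcard
      have hge : ∀ i : Fin k, m + 1 ≤ I i := fun i => by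
        have := hmem i
        simp only [hT', Finset.mem_filter] at this
        exact this.2
      -- disjointness of [m, m+1) from union over T'
      have hdisjB : Disjoint (Set.Ico m (m + 1)) (⋃ x ∈ T', Set.Ico x (x + 1)) := by
        rw [Set.disjoint_left]
        rintro a ⟨-, ha2⟩ hb
        simp only [Set.mem_iUnion] at hb
        obtain ⟨x, hx, hax, -⟩ := hb
        simp only [hT', Finset.mem_filter] at hx
        linarith [hx.2]
      have hsub : Set.Ico m (m + 1) ∪ (⋃ x ∈ T', Set.Ico x (x + 1))
          ⊆ ⋃ x ∈ T, Set.Ico x (x + 1) := by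
        apply Set.union_subset
        · exact fun a ha => Set.mem_biUnion hmT ha
        · exact Set.iUnion₂_mono' fun x hx => ⟨x, hT'sub hx, subset_rfl⟩
      have hmeasB : MeasurableSet (⋃ x ∈ T', Set.Ico x (x + 1)) :=
        T'.measurableSet_biUnion fun x _ => measurableSet_Ico
      have hvolU : volume (Set.Ico m (m + 1) ∪ (⋃ x ∈ T', Set.Ico x (x + 1)))
          = 1 + volume (⋃ x ∈ T', Set.Ico x (x + 1)) := by
        rw [measure_union hdisjB hmeasB, Real.volume_Ico]
        norm_num
      refine ⟨k + 1, Fin.cons m I, ?_, ?_, ?_, ?_⟩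
      · intro i
        refine Fin.cases ?_ ?_ i
        · exact hmT
        · intro j; exact hT'sub (hmem j)
      · intro i j hij
        have key : ∀ j : Fin k, Disjoint (Set.Ico m (m + 1))
            (Set.Ico (I j) (I j + 1)) := fun j => by
          rw [Set.disjoint_left]
          rintro a ⟨-, h2⟩ ⟨h3, -⟩
          linarith [hge j]
        rcases Fin.eq_zero_or_eq_succ i with rfl | ⟨i', rfl⟩ <;>
          rcases Fin.eq_zero_or_eq_succ j with rfl | ⟨j', rfl⟩
        · exact absurd rfl hij
        · simpa using key j'
        · simpa using (key i').symm
        · simp only [Fin.cons_succ]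
          exact hdisj i' j' (fun h => hij (by rw [h]))
      · calc ((k + 1 : ℕ) : ℝ≥0∞) = 1 + (k : ℝ≥0∞) := by
              push_cast; ring
          _ ≤ 1 + volume (⋃ x ∈ T', Set.Ico x (x + 1)) := by
              exact add_le_add_right hvol 1
          _ = volume (Set.Ico m (m + 1) ∪ (⋃ x ∈ T', Set.Ico x (x + 1))) := hvolU.symm
          _ ≤ volume (⋃ x ∈ T, Set.Ico x (x + 1)) := measure_mono hsub
      · intro x hx
        by_cases h : m + 1 ≤ x
        · obtain ⟨i, hi⟩ := hcov x (by simp [hT', hx, h])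
          exact ⟨i.succ, by simpa using hi⟩
        · exact ⟨0, by
            simp only [Fin.cons_zero, Set.mem_Ico]
            exact ⟨T.min'_le x hx, by linarith⟩⟩

/-- Given finitely many unit intervals `[x, x+1)` (starts `x ∈ T`) whose union has
measure `M`, there are `k ≤ M` pairwise disjoint unit intervals covering all starts. -/
theorem stmt_12 (T : Finset ℝ) :
    ∃ (k : ℕ) (I : Fin k → ℝ),
      (∀ i j : Fin k, i ≠ j →
        Disjoint (Set.Ico (I i) (I i + 1)) (Set.Ico (I j) (I j + 1))) ∧
      (k : ℝ≥0∞) ≤ volume (⋃ x ∈ T, Set.Ico x (x + 1)) ∧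
      (∀ x ∈ T, ∃ i : Fin k, x ∈ Set.Ico (I i) (I i + 1)) := by
  obtain ⟨k, I, -, h1, h2, h3⟩ := stmt_12_aux T.card T le_rfl
  exact ⟨k, I, h1, h2, h3⟩
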